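/- arXiv:1402.5040 — 3 statements merged into one kernel-verified Lean document; each statement's English description precedes it below -/
import Mathlib

section
/- For every integer n ≥ 1, every k with 0 ≤ k ≤ n, and every continuous function f : [0,1] → ℝ, one has lim_{ρ→∞} F_{n,k}^ρ(f) = f(k/n). -/
open MeasureTheory

/-- Euler Beta function `B(a,b) = ∫₀¹ t^(a-1) (1-t)^(b-1) dt`. -/
noncomputable def betaFn (a b : ℝ) : ℝ :=
  ∫ t in (0:ℝ)..1, t ^ (a - 1) * (1 - t) ^ (b - 1)

lemma complex_eq_real (a b : ℝ) {t : ℝ} (ht : t ∈ Set.Icc (0:ℝ) 1) :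
    (t:ℂ) ^ ((a:ℂ) - 1) * ((1:ℂ) - t) ^ ((b:ℂ) - 1)
      = ((t ^ (a-1) * (1-t) ^ (b-1) : ℝ) : ℂ) := by
  rw [Complex.ofReal_mul, Complex.ofReal_cpow ht.1,
    Complex.ofReal_cpow (by linarith [ht.2] : (0:ℝ) ≤ 1 - t)]
  push_cast
  ring

lemma betaIntegrand_integrable {a b : ℝ} (ha : 0 < a) (hb : 0 < b) :
    IntervalIntegrable (fun t : ℝ => t ^ (a-1) * (1-t) ^ (b-1)) volume 0 1 := by
  have h := Complex.betaIntegral_convergent (u := (a:ℂ)) (v := (b:ℂ))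
    (by simpa using ha) (by simpa using hb)
  rw [intervalIntegrable_iff] at h ⊢
  have h2 := h.re
  apply h2.congr
  filter_upwards [self_mem_ae_restrict measurableSet_uIoc] with t ht
  rw [Set.uIoc_of_le zero_le_one] at ht
  rw [complex_eq_real a b ⟨le_of_lt ht.1, ht.2⟩]
  simp

lemma ofReal_betaFn (a b : ℝ) :
    ((betaFn a b : ℝ) : ℂ) = Complex.betaIntegral a b := by
  rw [betaFn, Complex.betaIntegral, ← intervalIntegral.integral_ofReal]
  apply intervalIntegral.integral_congr
  intro t ht
  rw [Set.uIcc_of_le zero_le_one] at ht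
  exact (complex_eq_real a b ht).symm

lemma betaFn_rec {a b : ℝ} (ha : 0 < a) (hb : 0 < b) :
    a * betaFn a (b+1) = b * betaFn (a+1) b := by
  have h := Complex.betaIntegral_recurrence (u := (a:ℂ)) (v := (b:ℂ))
    (by simpa using ha) (by simpa using hb)
  have h1 := ofReal_betaFn a (b+1)
  have h2 := ofReal_betaFn (a+1) b
  push_cast at h1 h2
  have : ((a * betaFn a (b+1) : ℝ) : ℂ) = ((b * betaFn (a+1) b : ℝ) : ℂ) := by
    push_cast
    rw [h1, h2, h]
  exact_mod_cast this

lemma rpow_succ' {t : ℝ} (h0 : 0 ≤ t) {a : ℝ} (ha : a ≠ 0) : t ^ a = t ^ (a-1) * t := by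
  rcases h0.eq_or_lt with h | h
  · rw [← h, Real.zero_rpow ha, mul_zero]
  · calc t ^ a = t ^ (a-1+1) := by ring_nf
    _ = t ^ (a-1) * t ^ (1:ℝ) := Real.rpow_add h _ _
    _ = t ^ (a-1) * t := by rw [Real.rpow_one]

lemma betaFn_split {a b : ℝ} (ha : 0 < a) (hb : 0 < b) :
    betaFn a b = betaFn (a+1) b + betaFn a (b+1) := by
  rw [betaFn, betaFn, betaFn,
    ← intervalIntegral.integral_add
      (betaIntegrand_integrable (by linarith) hb) (betaIntegrand_integrable ha (by linarith))]
  apply intervalIntegral.integral_congr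
  intro t ht
  rw [Set.uIcc_of_le zero_le_one] at ht
  have e1 : t ^ (a+1-1) = t ^ (a-1) * t := by
    rw [show a+1-1 = a by ring]; exact rpow_succ' ht.1 (ne_of_gt ha)
  have e2 : (1-t) ^ (b+1-1) = (1-t) ^ (b-1) * (1-t) := by
    rw [show b+1-1 = b by ring]
    exact rpow_succ' (by linarith [ht.2]) (ne_of_gt hb)
  simp only []
  rw [e1, e2]; ring

lemma betaFn_succ_left {a b : ℝ} (ha : 0 < a) (hb : 0 < b) :
    (a + b) * betaFn (a+1) b = a * betaFn a b := by
  have h4 := betaFn_rec ha hb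
  have h5 := betaFn_split ha hb
  have : a * betaFn a b = a * betaFn (a+1) b + a * betaFn a (b+1) := by rw [h5]; ring
  linarith

lemma betaFn_pos {a b : ℝ} (ha : 0 < a) (hb : 0 < b) : 0 < betaFn a b := by
  apply intervalIntegral.intervalIntegral_pos_of_pos_on (betaIntegrand_integrable ha hb)
    _ one_pos
  intro t ht
  exact mul_pos (Real.rpow_pos_of_pos ht.1 _) (Real.rpow_pos_of_pos (by linarith [ht.2]) _)

lemma integrable_w_mul {a b : ℝ} (ha : 0 < a) (hb : 0 < b) {g : ℝ → ℝ}
    (hg : ContinuousOn g (Set.Icc 0 1)) :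
    IntervalIntegrable (fun t : ℝ => t ^ (a-1) * (1-t) ^ (b-1) * g t) volume 0 1 := by
  obtain ⟨M, hM⟩ := isCompact_Icc.exists_bound_of_continuousOn hg
  have hw := betaIntegrand_integrable ha hb
  refine (hw.const_mul M).mono_fun ?_ ?_
  · have hc : ContinuousOn (fun t : ℝ => t ^ (a-1) * (1-t) ^ (b-1) * g t) (Set.Ioo 0 1) := by
      apply ContinuousOn.mul
      · apply ContinuousOn.mul
        · exact continuousOn_id.rpow_const fun x hx => Or.inl (ne_of_gt hx.1)
        · exact (continuousOn_const.sub continuousOn_id).rpow_const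
            fun x hx => Or.inl (sub_ne_zero.mpr (ne_of_gt hx.2))
      · exact hg.mono Set.Ioo_subset_Icc_self
    have h1 : AEStronglyMeasurable (fun t : ℝ => t ^ (a-1) * (1-t) ^ (b-1) * g t)
        (volume.restrict (Set.Ioo 0 1)) := hc.aestronglyMeasurable measurableSet_Ioo
    rw [Set.uIoc_of_le zero_le_one]
    rwa [Measure.restrict_congr_set Ioo_ae_eq_Ioc] at h1
  · rw [Set.uIoc_of_le zero_le_one]
    filter_upwards [self_mem_ae_restrict measurableSet_Ioc] with t ht
    have htI : t ∈ Set.Icc (0:ℝ) 1 := ⟨le_of_lt ht.1, ht.2⟩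
    have hw0 : 0 ≤ t ^ (a-1) * (1-t) ^ (b-1) :=
      mul_nonneg (Real.rpow_nonneg htI.1 _) (Real.rpow_nonneg (by linarith [htI.2]) _)
    rw [Real.norm_eq_abs, Real.norm_eq_abs, abs_mul (t ^ (a-1) * (1-t) ^ (b-1)),
      abs_mul M, abs_of_nonneg hw0]
    calc t ^ (a-1) * (1-t) ^ (b-1) * |g t| ≤ t ^ (a-1) * (1-t) ^ (b-1) * |M| :=
          mul_le_mul_of_nonneg_left ((hM t htI).trans (le_abs_self M)) hw0
      _ = |M| * (t ^ (a-1) * (1-t) ^ (b-1)) := by ring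

lemma first_moment {a b : ℝ} (ha : 0 < a) (hb : 0 < b) :
    ∫ t in (0:ℝ)..1, t ^ (a-1) * (1-t) ^ (b-1) * t = betaFn (a+1) b := by
  rw [betaFn]
  apply intervalIntegral.integral_congr
  intro t ht
  rw [Set.uIcc_of_le zero_le_one] at ht
  simp only []
  rw [show a+1-1 = a by ring, rpow_succ' ht.1 (ne_of_gt ha)]
  ring

lemma second_moment_raw {a b : ℝ} (ha : 0 < a) (hb : 0 < b) :
    ∫ t in (0:ℝ)..1, t ^ (a-1) * (1-t) ^ (b-1) * t^2 = betaFn (a+2) b := by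
  rw [betaFn]
  apply intervalIntegral.integral_congr
  intro t ht
  rw [Set.uIcc_of_le zero_le_one] at ht
  simp only []
  rw [show a+2-1 = a+1 by ring, rpow_succ' ht.1 (by positivity : a+1 ≠ 0),
    show a+1-1 = a by ring, rpow_succ' ht.1 (ne_of_gt ha)]
  ring

lemma second_moment {a b : ℝ} (ha : 0 < a) (hb : 0 < b) :
    ∫ t in (0:ℝ)..1, t ^ (a-1) * (1-t) ^ (b-1) * (t - a/(a+b))^2
      = betaFn a b * ((a/(a+b)) * (b/(a+b)) / (a+b+1)) := by
  have hs : (0:ℝ) < a + b := by linarith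
  have hI2 : IntervalIntegrable (fun t : ℝ => t ^ (a-1) * (1-t) ^ (b-1) * t^2) volume 0 1 :=
    integrable_w_mul ha hb (by fun_prop)
  have hI1 : IntervalIntegrable (fun t : ℝ => t ^ (a-1) * (1-t) ^ (b-1) * t) volume 0 1 :=
    integrable_w_mul ha hb (by fun_prop)
  have hI0 := betaIntegrand_integrable ha hb
  have key : ∫ t in (0:ℝ)..1, t ^ (a-1) * (1-t) ^ (b-1) * (t - a/(a+b))^2
      = (∫ t in (0:ℝ)..1, t ^ (a-1) * (1-t) ^ (b-1) * t^2)
        - (2*(a/(a+b))) * (∫ t in (0:ℝ)..1, t ^ (a-1) * (1-t) ^ (b-1) * t)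
        + (a/(a+b))^2 * betaFn a b := by
    rw [betaFn, ← intervalIntegral.integral_const_mul, ← intervalIntegral.integral_const_mul,
      ← intervalIntegral.integral_sub hI2 (hI1.const_mul _),
      ← intervalIntegral.integral_add (hI2.sub (hI1.const_mul _)) (hI0.const_mul _)]
    apply intervalIntegral.integral_congr
    intro t _
    simp only []
    ring
  rw [key, second_moment_raw ha hb, first_moment ha hb]
  have e1 : betaFn (a+1) b = a/(a+b) * betaFn a b := by
    have := betaFn_succ_left ha hb
    field_simp
    linarith
  have e2 : betaFn (a+2) b = (a+1)/(a+b+1) * betaFn (a+1) b := by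
    have := betaFn_succ_left (by linarith : (0:ℝ) < a+1) hb
    have h2 : (a+1+b) * betaFn (a+1+1) b = (a+1) * betaFn (a+1) b := this
    rw [show a+(2:ℝ) = a+1+1 by ring]
    have hs1 : (0:ℝ) < a+b+1 := by linarith
    field_simp
    rw [show a+b+1 = a+1+b by ring]
    linarith
  rw [e2, e1]
  field_simp
  ring

/-- The functionals `F_{n,k}^ρ`. -/
noncomputable def Ffun (n k : ℕ) (ρ : ℝ) (f : ℝ → ℝ) : ℝ :=
  if k = 0 then f 0
  else if k = n then f 1
  else (betaFn ((k : ℝ) * ρ) (((n : ℝ) - (k : ℝ)) * ρ))⁻¹ *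
    ∫ t in (0:ℝ)..1, t ^ ((k : ℝ) * ρ - 1) * (1 - t) ^ (((n : ℝ) - (k : ℝ)) * ρ - 1) * f t

/-- Bernstein basis polynomial `p_{n,k}(x)`. -/
noncomputable def bern (n k : ℕ) (x : ℝ) : ℝ :=
  (n.choose k : ℝ) * x ^ k * (1 - x) ^ (n - k)

/-- The operator `U_n^ρ`. -/
noncomputable def Uop (n : ℕ) (ρ : ℝ) (f : ℝ → ℝ) (x : ℝ) : ℝ :=
  ∑ k ∈ Finset.range (n + 1), Ffun n k ρ f * bern n k x

/-- For every `n ≥ 1`, `0 ≤ k ≤ n` and continuous `f : [0,1] → ℝ`,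
`lim_{ρ→∞} F_{n,k}^ρ(f) = f(k/n)`. -/
theorem limit_Ffun_atTop (n : ℕ) (hn : 1 ≤ n) (k : ℕ) (hk : k ≤ n)
    (f : ℝ → ℝ) (hf : ContinuousOn f (Set.Icc 0 1)) :
    Filter.Tendsto (fun ρ : ℝ => Ffun n k ρ f) Filter.atTop
      (nhds (f ((k : ℝ) / (n : ℝ)))) := by
  rcases eq_or_ne k 0 with rfl | hk0
  · simp only [Ffun, if_pos rfl, Nat.cast_zero, zero_div]
    exact tendsto_const_nhds
  rcases eq_or_ne k n with rfl | hkn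
  · have hne : (k:ℝ) ≠ 0 := Nat.cast_ne_zero.mpr hk0
    simp only [Ffun, if_neg hk0, if_pos rfl, div_self hne]
    exact tendsto_const_nhds
  -- main case
  have hkpos : 0 < k := Nat.pos_of_ne_zero hk0
  have hkltn : k < n := lt_of_le_of_ne hk hkn
  have hkR : (0:ℝ) < k := by exact_mod_cast hkpos
  have hnR : (0:ℝ) < n := by exact_mod_cast (by omega : 0 < n)
  have hknR : (k:ℝ) < n := by exact_mod_cast hkltn
  set x₀ : ℝ := (k:ℝ)/n with hx₀def
  have hx₀pos : 0 < x₀ := by positivity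
  have hx₀lt : x₀ < 1 := by rw [hx₀def, div_lt_one hnR]; exact hknR
  have hx₀mem : x₀ ∈ Set.Icc (0:ℝ) 1 := ⟨le_of_lt hx₀pos, le_of_lt hx₀lt⟩
  simp only [Ffun, if_neg hk0, if_neg hkn]
  rw [Metric.tendsto_nhds]
  intro ε hε
  obtain ⟨C, hC⟩ := isCompact_Icc.exists_bound_of_continuousOn hf
  have hC0 : 0 ≤ C := le_trans (norm_nonneg _) (hC 0 (by norm_num))
  have hcont := hf x₀ hx₀mem
  rw [Metric.continuousWithinAt_iff] at hcont
  obtain ⟨δ, hδ, hδ'⟩ := hcont (ε/2) (by linarith)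
  set c : ℝ := 2*C/δ^2 with hcdef
  have hc0 : 0 ≤ c := by positivity
  have hpt : ∀ t ∈ Set.Icc (0:ℝ) 1, |f t - f x₀| ≤ ε/2 + c * (t-x₀)^2 := by
    intro t ht
    by_cases h : |t - x₀| < δ
    · have h1 := hδ' ht (by rwa [Real.dist_eq])
      rw [Real.dist_eq] at h1
      have h2 : 0 ≤ c * (t-x₀)^2 := by positivity
      linarith
    · push_neg at h
      have h2 : δ^2 ≤ (t-x₀)^2 := by
        have h5 := abs_nonneg (t-x₀)
        nlinarith [sq_abs (t-x₀)]
      have h3 : |f t - f x₀| ≤ 2*C := by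
        have ha := hC t ht
        have hb := hC x₀ hx₀mem
        rw [Real.norm_eq_abs] at ha hb
        calc |f t - f x₀| ≤ |f t| + |f x₀| := by
              have := norm_sub_le (f t) (f x₀)
              simpa [Real.norm_eq_abs] using this
          _ ≤ 2 * C := by linarith
      have h4 : c * δ^2 = 2*C := by rw [hcdef]; field_simp
      nlinarith
  set K : ℝ := c * (x₀ * (1-x₀)) with hKdef
  have hK0 : 0 ≤ K := mul_nonneg hc0 (mul_nonneg hx₀pos.le (by linarith))
  have key : ∀ ρ : ℝ, 0 < ρ →
      |(betaFn ((k : ℝ) * ρ) (((n : ℝ) - (k : ℝ)) * ρ))⁻¹ *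
        (∫ t in (0:ℝ)..1, t ^ ((k : ℝ) * ρ - 1) * (1 - t) ^ (((n : ℝ) - (k : ℝ)) * ρ - 1) * f t)
        - f x₀| ≤ ε/2 + K / ((n:ℝ)*ρ+1) := by
    intro ρ hρ
    have ha : 0 < (k:ℝ)*ρ := mul_pos hkR hρ
    have hb : 0 < ((n:ℝ)-(k:ℝ))*ρ := mul_pos (by linarith) hρ
    set a : ℝ := (k:ℝ)*ρ with hadef
    set b : ℝ := ((n:ℝ)-(k:ℝ))*ρ with hbdef
    have hs : a + b = (n:ℝ)*ρ := by rw [hadef, hbdef]; ring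
    have hsden : (0:ℝ) < (n:ℝ)*ρ + 1 := by positivity
    have hx : a/(a+b) = x₀ := by
      rw [hs, hadef, hx₀def, mul_comm (k:ℝ) ρ, mul_comm (n:ℝ) ρ,
        mul_div_mul_left _ _ (ne_of_gt hρ)]
    have hB := betaFn_pos ha hb
    have hBne : betaFn a b ≠ 0 := ne_of_gt hB
    have hIf : IntervalIntegrable (fun t : ℝ => t^(a-1)*(1-t)^(b-1) * f t) volume 0 1 :=
      integrable_w_mul ha hb hf
    have hI0 := betaIntegrand_integrable ha hb
    have hIg : IntervalIntegrable (fun t : ℝ => t^(a-1)*(1-t)^(b-1) * (f t - f x₀)) volume 0 1 :=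
      integrable_w_mul ha hb (hf.sub continuousOn_const)
    have hIq : IntervalIntegrable
        (fun t : ℝ => t^(a-1)*(1-t)^(b-1) * (ε/2 + c*(t-x₀)^2)) volume 0 1 :=
      integrable_w_mul ha hb (by fun_prop)
    have hIs : IntervalIntegrable (fun t : ℝ => t^(a-1)*(1-t)^(b-1) * (t-x₀)^2) volume 0 1 :=
      integrable_w_mul ha hb (by fun_prop)
    have e1 : (∫ t in (0:ℝ)..1, t^(a-1)*(1-t)^(b-1) * (f t - f x₀))
        = (∫ t in (0:ℝ)..1, t^(a-1)*(1-t)^(b-1) * f t) - f x₀ * betaFn a b := by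
      rw [betaFn, ← intervalIntegral.integral_const_mul,
        ← intervalIntegral.integral_sub hIf (hI0.const_mul _)]
      apply intervalIntegral.integral_congr
      intro t _
      simp only []
      ring
    have e2 : (betaFn a b)⁻¹ *
          (∫ t in (0:ℝ)..1, t^(a-1)*(1-t)^(b-1) * f t) - f x₀
        = (betaFn a b)⁻¹ *
          (∫ t in (0:ℝ)..1, t^(a-1)*(1-t)^(b-1) * (f t - f x₀)) := by
      rw [e1]
      field_simp
    rw [e2, abs_mul, abs_of_nonneg (inv_nonneg.mpr hB.le)]
    have e3 : |∫ t in (0:ℝ)..1, t^(a-1)*(1-t)^(b-1) * (f t - f x₀)|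
        ≤ ∫ t in (0:ℝ)..1, t^(a-1)*(1-t)^(b-1) * (ε/2 + c*(t-x₀)^2) := by
      calc |∫ t in (0:ℝ)..1, t^(a-1)*(1-t)^(b-1) * (f t - f x₀)|
          ≤ ∫ t in (0:ℝ)..1, |t^(a-1)*(1-t)^(b-1) * (f t - f x₀)| :=
            intervalIntegral.abs_integral_le_integral_abs zero_le_one
        _ ≤ _ := by
            apply intervalIntegral.integral_mono_on zero_le_one hIg.abs hIq
            intro t ht
            have hw0 : 0 ≤ t^(a-1)*(1-t)^(b-1) :=
              mul_nonneg (Real.rpow_nonneg ht.1 _)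
                (Real.rpow_nonneg (by linarith [ht.2] : (0:ℝ) ≤ 1-t) _)
            rw [abs_mul, abs_of_nonneg hw0]
            exact mul_le_mul_of_nonneg_left (hpt t ht) hw0
    have hy : b/(a+b) = 1 - x₀ := by
      have hab : a + b ≠ 0 := by positivity
      have : a/(a+b) + b/(a+b) = 1 := by
        rw [← add_div, div_self hab]
      linarith [hx]
    have hsm := second_moment ha hb
    rw [hx, hy, hs] at hsm
    have e4 : (∫ t in (0:ℝ)..1, t^(a-1)*(1-t)^(b-1) * (ε/2 + c*(t-x₀)^2))
        = ε/2 * betaFn a b + c * (betaFn a b * (x₀*(1-x₀)/((n:ℝ)*ρ+1))) := by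
      have esplit : (∫ t in (0:ℝ)..1, t^(a-1)*(1-t)^(b-1) * (ε/2 + c*(t-x₀)^2))
          = (ε/2) * (∫ t in (0:ℝ)..1, t^(a-1)*(1-t)^(b-1))
            + c * (∫ t in (0:ℝ)..1, t^(a-1)*(1-t)^(b-1)*(t-x₀)^2) := by
        rw [← intervalIntegral.integral_const_mul, ← intervalIntegral.integral_const_mul,
          ← intervalIntegral.integral_add (hI0.const_mul _) (hIs.const_mul _)]
        apply intervalIntegral.integral_congr
        intro t _
        simp only []
        ring
      rw [esplit, hsm, show (∫ t in (0:ℝ)..1, t^(a-1)*(1-t)^(b-1)) = betaFn a b from rfl]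
    calc (betaFn a b)⁻¹ * |∫ t in (0:ℝ)..1, t^(a-1)*(1-t)^(b-1) * (f t - f x₀)|
        ≤ (betaFn a b)⁻¹ *
            (ε/2 * betaFn a b + c * (betaFn a b * (x₀*(1-x₀)/((n:ℝ)*ρ+1)))) :=
          mul_le_mul_of_nonneg_left (e3.trans_eq e4) (inv_nonneg.mpr hB.le)
      _ = ε/2 + K / ((n:ℝ)*ρ+1) := by
          rw [hKdef]
          field_simp
  filter_upwards [Filter.eventually_ge_atTop (max 1 (2*K/ε))] with ρ hρ
  have hρ1 : (1:ℝ) ≤ ρ := le_trans (le_max_left _ _) hρ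
  have hρpos : (0:ℝ) < ρ := by linarith
  have h2K : 2*K/ε ≤ ρ := le_trans (le_max_right _ _) hρ
  have hKρ : 2*K ≤ ρ * ε := by rwa [div_le_iff₀ hε] at h2K
  have hn1 : (1:ℝ) ≤ n := by exact_mod_cast hn
  have hden : (0:ℝ) < (n:ℝ)*ρ + 1 := by positivity
  have htail : K / ((n:ℝ)*ρ+1) < ε/2 := by
    rw [div_lt_iff₀ hden]
    nlinarith [mul_nonneg (by linarith : (0:ℝ) ≤ (n:ℝ)-1) hρpos.le]
  have hkey := key ρ hρpos
  rw [Real.dist_eq]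
  calc _ ≤ ε/2 + K / ((n:ℝ)*ρ+1) := hkey
    _ < ε := by linarith
end

section
/- For every integer n ≥ 1 and every continuous function f : [0,1] → ℝ, the functions U_n^ρ f converge uniformly on [0,1], as ρ → ∞, to the classical Bernstein polynomial B_n f, where B_n f(x) = ∑_{k=0}^n f(k/n) p_{n,k}(x). -/
open MeasureTheory

lemma betaFn_complex (a b : ℝ) : Complex.betaIntegral a b = (betaFn a b : ℂ) := by
  rw [Complex.betaIntegral, betaFn, ← intervalIntegral.integral_ofReal]
  apply intervalIntegral.integral_congr
  intro x hx
  dsimp only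
  rw [Set.uIcc_of_le (by norm_num : (0:ℝ) ≤ 1)] at hx
  have h1 : (0:ℝ) ≤ x := hx.1
  have h2 : (0:ℝ) ≤ 1 - x := by linarith [hx.2]
  rw [show ((a:ℂ) - 1) = ((a - 1 : ℝ) : ℂ) by push_cast; ring,
    show ((b:ℂ) - 1) = ((b - 1 : ℝ) : ℂ) by push_cast; ring,
    show (1 - (x:ℂ)) = ((1 - x : ℝ) : ℂ) by push_cast; ring,
    ← Complex.ofReal_cpow h1, ← Complex.ofReal_cpow h2]
  push_cast
  ring

lemma betaFn_eq_Gamma {a b : ℝ} (ha : 0 < a) (hb : 0 < b) :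
    betaFn a b = Real.Gamma a * Real.Gamma b / Real.Gamma (a + b) := by
  have h := Complex.Gamma_mul_Gamma_eq_betaIntegral (s := (a:ℂ)) (t := (b:ℂ))
    (by simpa using ha) (by simpa using hb)
  rw [betaFn_complex] at h
  rw [show ((a:ℂ) + (b:ℂ)) = ((a + b : ℝ) : ℂ) by push_cast; ring] at h
  rw [Complex.Gamma_ofReal, Complex.Gamma_ofReal, Complex.Gamma_ofReal] at h
  have h2 : Real.Gamma a * Real.Gamma b = Real.Gamma (a + b) * betaFn a b := by
    exact_mod_cast h
  have hg : Real.Gamma (a + b) ≠ 0 := (Real.Gamma_pos_of_pos (by linarith)).ne'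
  rw [eq_div_iff hg]
  linear_combination -h2

lemma betaFn_succ {a b : ℝ} (ha : 0 < a) (hb : 0 < b) :
    betaFn (a + 1) b = a / (a + b) * betaFn a b := by
  rw [betaFn_eq_Gamma (by linarith) hb, betaFn_eq_Gamma ha hb,
    Real.Gamma_add_one ha.ne', show a + 1 + b = (a + b) + 1 by ring,
    Real.Gamma_add_one (show a + b ≠ 0 by positivity)]
  have hab : a + b ≠ 0 := by positivity
  have hg : Real.Gamma (a + b) ≠ 0 := (Real.Gamma_pos_of_pos (by linarith)).ne'
  field_simp

lemma beta_est {a b M δ ε : ℝ} (ha2 : 2 ≤ a) (hb2 : 2 ≤ b)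
    {f : ℝ → ℝ} (hf : ContinuousOn f (Set.Icc 0 1))
    (hM : ∀ x ∈ Set.Icc (0:ℝ) 1, |f x| ≤ M)
    (hδ : 0 < δ) (hε : 0 < ε) (hMc : 0 ≤ M)
    (hδf : ∀ x ∈ Set.Icc (0:ℝ) 1, ∀ y ∈ Set.Icc (0:ℝ) 1, |x - y| < δ → |f x - f y| < ε) :
    |(betaFn a b)⁻¹ * (∫ t in (0:ℝ)..1, t ^ (a-1) * (1-t) ^ (b-1) * f t) - f (a/(a+b))|
      ≤ ε + (2*M/δ^2) * (a*b/((a+b)^2*(a+b+1))) := by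
  have ha0 : 0 < a := by linarith
  have hb0 : 0 < b := by linarith
  have hab0 : 0 < a + b := by linarith
  set m : ℝ := a / (a + b) with hmdef
  have hm0 : 0 ≤ m := by positivity
  have hm1 : m ≤ 1 := by rw [hmdef, div_le_one hab0]; linarith
  have hmIcc : m ∈ Set.Icc (0:ℝ) 1 := ⟨hm0, hm1⟩
  set c : ℝ := 2*M/δ^2 with hcdef
  have hc0 : 0 ≤ c := by positivity
  set I : ℝ := betaFn a b with hIdef
  have hI : 0 < I := betaFn_pos ha0 hb0
  have hIcc : Set.uIcc (0:ℝ) 1 = Set.Icc 0 1 := Set.uIcc_of_le zero_le_one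
  have cw : Continuous (fun t : ℝ => t ^ (a-1) * (1-t) ^ (b-1)) := by
    apply Continuous.mul
    · exact Real.continuous_rpow_const (by linarith)
    · exact (Real.continuous_rpow_const (by linarith)).comp (continuous_const.sub continuous_id)
  have cwnn : ∀ t ∈ Set.Icc (0:ℝ) 1, 0 ≤ t ^ (a-1) * (1-t) ^ (b-1) := by
    intro t ht
    have := ht.1; have := ht.2
    have h1 : (0:ℝ) ≤ t ^ (a-1) := Real.rpow_nonneg ht.1 _
    have h2 : (0:ℝ) ≤ (1-t) ^ (b-1) := Real.rpow_nonneg (by linarith) _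
    positivity
  have hInt : ∀ g : ℝ → ℝ, ContinuousOn g (Set.Icc 0 1) →
      IntervalIntegrable (fun t => t ^ (a-1) * (1-t) ^ (b-1) * g t) volume 0 1 := by
    intro g hg
    apply ContinuousOn.intervalIntegrable
    rw [hIcc]
    exact cw.continuousOn.mul hg
  -- basic integral values
  have hI0 : (∫ t in (0:ℝ)..1, t ^ (a-1) * (1-t) ^ (b-1)) = I := rfl
  have hI1 : (∫ t in (0:ℝ)..1, t ^ (a-1) * (1-t) ^ (b-1) * t) = m * I := by
    rw [show m * I = betaFn (a+1) b from (betaFn_succ ha0 hb0).symm, betaFn]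
    apply intervalIntegral.integral_congr
    intro t ht
    dsimp only
    rw [hIcc] at ht
    rw [show a + 1 - 1 = a - 1 + 1 by ring]
    rcases eq_or_lt_of_le ht.1 with h | h
    · rw [← h, Real.zero_rpow (show a-1 ≠ 0 from ne_of_gt (by linarith)),
        Real.zero_rpow (show a-1+1 ≠ 0 from ne_of_gt (by linarith))]
      ring
    · rw [Real.rpow_add_one (ne_of_gt h)]; ring
  have hI2 : (∫ t in (0:ℝ)..1, t ^ (a-1) * (1-t) ^ (b-1) * t^2)
      = (a+1)/(a+b+1) * (m * I) := by
    have e1 : (a+1)/(a+b+1) * (m * I) = betaFn (a+2) b := by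
      rw [show a+2 = (a+1)+1 by ring, betaFn_succ (by linarith) hb0,
        show a+1+b = a+b+1 by ring, betaFn_succ ha0 hb0]
    rw [e1, betaFn]
    apply intervalIntegral.integral_congr
    intro t ht
    dsimp only
    rw [hIcc] at ht
    rw [show a + 2 - 1 = a - 1 + 1 + 1 by ring]
    rcases eq_or_lt_of_le ht.1 with h | h
    · rw [← h, Real.zero_rpow (show a-1 ≠ 0 from ne_of_gt (by linarith)),
        Real.zero_rpow (show a-1+1+1 ≠ 0 from ne_of_gt (by linarith))]
      ring
    · rw [Real.rpow_add_one (ne_of_gt h), Real.rpow_add_one (ne_of_gt h)]; ring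
  -- variance
  have hK : (∫ t in (0:ℝ)..1, t ^ (a-1) * (1-t) ^ (b-1) * (t - m)^2)
      = I * (a*b/((a+b)^2*(a+b+1))) := by
    have ia : IntervalIntegrable (fun t => t ^ (a-1) * (1-t) ^ (b-1) * t^2) volume 0 1 :=
      hInt _ (continuous_pow 2).continuousOn
    have ib : IntervalIntegrable
        (fun t => (2*m) * (t ^ (a-1) * (1-t) ^ (b-1) * t)) volume 0 1 :=
      (hInt _ continuous_id.continuousOn).const_mul _
    have ic : IntervalIntegrable (fun t => m^2 * (t ^ (a-1) * (1-t) ^ (b-1))) volume 0 1 :=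
      (cw.intervalIntegrable 0 1).const_mul _
    have e1 : (fun t : ℝ => t ^ (a-1) * (1-t) ^ (b-1) * (t - m)^2)
        = fun t => (t ^ (a-1) * (1-t) ^ (b-1) * t^2
            - (2*m) * (t ^ (a-1) * (1-t) ^ (b-1) * t))
            + m^2 * (t ^ (a-1) * (1-t) ^ (b-1)) := by
      funext t; ring
    rw [e1, intervalIntegral.integral_add (ia.sub ib) ic,
      intervalIntegral.integral_sub ia ib,
      intervalIntegral.integral_const_mul, intervalIntegral.integral_const_mul,
      hI0, hI1, hI2, hmdef]
    have h1 : a + b ≠ 0 := ne_of_gt hab0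
    have h2 : a + b + 1 ≠ 0 := by positivity
    field_simp
    ring
  -- the pointwise bound
  have hpt : ∀ t ∈ Set.Icc (0:ℝ) 1, |f t - f m| ≤ ε + c * (t - m)^2 := by
    intro t ht
    rcases lt_or_ge (|t - m|) δ with h | h
    · have := hδf t ht m hmIcc h
      nlinarith [sq_nonneg (t - m)]
    · have h2 : δ^2 ≤ (t - m)^2 := by
        rw [← sq_abs (t - m)]
        exact pow_le_pow_left₀ hδ.le h 2
      have hft := hM t ht
      have hfm := hM m hmIcc
      have habs : |f t - f m| ≤ 2 * M := by
        calc |f t - f m| ≤ |f t| + |f m| := abs_sub _ _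
          _ ≤ 2 * M := by linarith
      have : 2 * M ≤ c * (t - m)^2 := by
        rw [hcdef]
        rw [div_mul_eq_mul_div, le_div_iff₀ (by positivity)]
        nlinarith
      linarith
  -- rewrite the difference as an integral
  have hdiff : (betaFn a b)⁻¹ * (∫ t in (0:ℝ)..1, t ^ (a-1) * (1-t) ^ (b-1) * f t) - f m
      = I⁻¹ * ∫ t in (0:ℝ)..1, t ^ (a-1) * (1-t) ^ (b-1) * (f t - f m) := by
    have e1 : (fun t : ℝ => t ^ (a-1) * (1-t) ^ (b-1) * (f t - f m))
        = fun t => t ^ (a-1) * (1-t) ^ (b-1) * f t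
            - (t ^ (a-1) * (1-t) ^ (b-1)) * f m := by
      funext t; ring
    rw [e1, intervalIntegral.integral_sub (hInt f hf)
      ((cw.intervalIntegrable 0 1).mul_const _),
      intervalIntegral.integral_mul_const, hI0]
    field_simp
    rw [← hIdef, sub_mul, div_mul_cancel₀ _ hI.ne']
  rw [hdiff]
  have hstep1 : |∫ t in (0:ℝ)..1, t ^ (a-1) * (1-t) ^ (b-1) * (f t - f m)|
      ≤ ∫ t in (0:ℝ)..1, t ^ (a-1) * (1-t) ^ (b-1) * |f t - f m| := by
    refine le_trans (intervalIntegral.abs_integral_le_integral_abs zero_le_one) ?_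
    apply le_of_eq
    apply intervalIntegral.integral_congr
    intro t ht
    dsimp only
    rw [hIcc] at ht
    rw [abs_mul, abs_of_nonneg (cwnn t ht)]
  have hstep2 : (∫ t in (0:ℝ)..1, t ^ (a-1) * (1-t) ^ (b-1) * |f t - f m|)
      ≤ ∫ t in (0:ℝ)..1, t ^ (a-1) * (1-t) ^ (b-1) * (ε + c * (t - m)^2) := by
    apply intervalIntegral.integral_mono_on zero_le_one
    · exact hInt _ ((hf.sub continuousOn_const).abs)
    · exact hInt _ ((continuous_const.add (continuous_const.mul ((continuous_sub_right m).pow 2))).continuousOn)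
    · intro t ht
      exact mul_le_mul_of_nonneg_left (hpt t ht) (cwnn t ht)
  have hstep3 : (∫ t in (0:ℝ)..1, t ^ (a-1) * (1-t) ^ (b-1) * (ε + c * (t - m)^2))
      = ε * I + c * (I * (a*b/((a+b)^2*(a+b+1)))) := by
    have e1 : (fun t : ℝ => t ^ (a-1) * (1-t) ^ (b-1) * (ε + c * (t - m)^2))
        = fun t => ε * (t ^ (a-1) * (1-t) ^ (b-1))
            + c * (t ^ (a-1) * (1-t) ^ (b-1) * (t - m)^2) := by
      funext t; ring
    rw [e1, intervalIntegral.integral_add ((cw.intervalIntegrable 0 1).const_mul _)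
      ((hInt (fun t => (t - m)^2) (((continuous_sub_right m).pow 2).continuousOn)).const_mul _),
      intervalIntegral.integral_const_mul, intervalIntegral.integral_const_mul, hI0, hK]
  calc |I⁻¹ * ∫ t in (0:ℝ)..1, t ^ (a-1) * (1-t) ^ (b-1) * (f t - f m)|
      = I⁻¹ * |∫ t in (0:ℝ)..1, t ^ (a-1) * (1-t) ^ (b-1) * (f t - f m)| := by
        rw [abs_mul, abs_of_pos (inv_pos.mpr hI)]
    _ ≤ I⁻¹ * (ε * I + c * (I * (a*b/((a+b)^2*(a+b+1))))) := by
        apply mul_le_mul_of_nonneg_left _ (inv_pos.mpr hI).le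
        rw [← hstep3]
        exact le_trans hstep1 hstep2
    _ = ε + c * (a*b/((a+b)^2*(a+b+1))) := by
        field_simp

lemma Ffun_tendsto (n k : ℕ) (hk : 1 ≤ k) (hkn : k < n) (f : ℝ → ℝ)
    (hf : ContinuousOn f (Set.Icc 0 1)) :
    Filter.Tendsto (fun ρ : ℝ => Ffun n k ρ f) Filter.atTop
      (nhds (f ((k : ℝ) / (n : ℝ)))) := by
  have hk1 : (1:ℝ) ≤ (k:ℝ) := by exact_mod_cast hk
  have hnk1 : (1:ℝ) ≤ (n:ℝ) - (k:ℝ) := by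
    have : (k:ℝ) + 1 ≤ (n:ℝ) := by exact_mod_cast hkn
    linarith
  obtain ⟨M, hM0, hM⟩ : ∃ M : ℝ, 0 ≤ M ∧ ∀ x ∈ Set.Icc (0:ℝ) 1, |f x| ≤ M := by
    obtain ⟨C, hC⟩ := isCompact_Icc.exists_bound_of_continuousOn hf
    refine ⟨max C 0, le_max_right _ _, fun x hx => ?_⟩
    exact le_trans (by simpa using hC x hx) (le_max_left _ _)
  have hucf : UniformContinuousOn f (Set.Icc 0 1) :=
    isCompact_Icc.uniformContinuousOn_of_continuous hf
  rw [Metric.tendsto_atTop]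
  intro ε hε
  obtain ⟨δ, hδ, hδf⟩ := Metric.uniformContinuousOn_iff.mp hucf (ε/4) (by linarith)
  set c : ℝ := 2*M/δ^2 with hcdef
  have hc0 : 0 ≤ c := by positivity
  refine ⟨max 2 (4*c/ε), fun ρ hρ => ?_⟩
  have hρ2 : (2:ℝ) ≤ ρ := le_trans (le_max_left _ _) hρ
  have hρc : 4*c/ε ≤ ρ := le_trans (le_max_right _ _) hρ
  have hρ0 : (0:ℝ) < ρ := by linarith
  set A : ℝ := (k:ℝ)*ρ with hA
  set B : ℝ := ((n:ℝ)-(k:ℝ))*ρ with hB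
  have ha2 : 2 ≤ A := by rw [hA]; nlinarith
  have hb2 : 2 ≤ B := by rw [hB]; nlinarith
  have hFf : Ffun n k ρ f = (betaFn A B)⁻¹ *
      ∫ t in (0:ℝ)..1, t ^ (A - 1) * (1-t) ^ (B - 1) * f t := by
    rw [Ffun, if_neg (by omega), if_neg (by omega)]
  have hmm : A / (A + B) = (k:ℝ)/(n:ℝ) := by
    rw [hA, hB, show (k:ℝ)*ρ + ((n:ℝ)-(k:ℝ))*ρ = (n:ℝ)*ρ by ring,
      mul_div_mul_right _ _ (ne_of_gt hρ0)]
  have hδf' : ∀ x ∈ Set.Icc (0:ℝ) 1, ∀ y ∈ Set.Icc (0:ℝ) 1, |x - y| < δ →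
      |f x - f y| < ε/4 := by
    intro x hx y hy hxy
    have := hδf x hx y hy (by rwa [Real.dist_eq])
    rwa [Real.dist_eq] at this
  have hest := beta_est (ε := ε/4) ha2 hb2 hf hM hδ (by linarith) hM0 hδf'
  rw [hmm] at hest
  rw [Real.dist_eq, hFf]
  refine lt_of_le_of_lt hest ?_
  have hAρ : ρ ≤ A := by rw [hA]; nlinarith
  have hXle : A*B/((A+B)^2*(A+B+1)) ≤ 1/ρ := by
    rw [div_le_div_iff₀ (by positivity) hρ0]
    have hAB0 : (0:ℝ) ≤ A*B := by nlinarith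
    have h1 : A*B ≤ (A+B)^2 := by nlinarith [sq_nonneg A, sq_nonneg B]
    have h2 : ρ ≤ A+B+1 := by linarith
    calc A*B*ρ ≤ A*B*(A+B+1) := mul_le_mul_of_nonneg_left h2 hAB0
      _ ≤ (A+B)^2*(A+B+1) := mul_le_mul_of_nonneg_right h1 (by linarith)
      _ = 1*((A+B)^2*(A+B+1)) := (one_mul _).symm
  have hcρ : c * (1/ρ) ≤ ε/4 := by
    rw [mul_one_div, div_le_div_iff₀ hρ0 (by norm_num : (0:ℝ) < 4)]
    have h4c : 4*c ≤ ρ*ε := (div_le_iff₀ hε).mp hρc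
    linarith
  have := mul_le_mul_of_nonneg_left hXle hc0
  linarith


/-- For every `n ≥ 1` and continuous `f : [0,1] → ℝ`, the functions `U_n^ρ f`
converge uniformly on `[0,1]`, as `ρ → ∞`, to the Bernstein polynomial
`B_n f(x) = ∑_{k=0}^n f(k/n) p_{n,k}(x)`. -/
theorem Uop_tendstoUniformlyOn_bernstein (n : ℕ) (hn : 1 ≤ n)
    (f : ℝ → ℝ) (hf : ContinuousOn f (Set.Icc 0 1)) :
    TendstoUniformlyOn (fun (ρ : ℝ) (x : ℝ) => Uop n ρ f x)
      (fun x => ∑ k ∈ Finset.range (n + 1), f ((k : ℝ) / (n : ℝ)) * bern n k x)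
      Filter.atTop (Set.Icc 0 1) := by
  have hbb : ∀ k : ℕ, ∀ x ∈ Set.Icc (0:ℝ) 1, |bern n k x| ≤ (2:ℝ)^n := by
    intro k x hx
    obtain ⟨hx0, hx1⟩ := hx
    have h1 : (0:ℝ) ≤ x ^ k := by positivity
    have h2 : (0:ℝ) ≤ (1-x) ^ (n-k) := by
      apply pow_nonneg; linarith
    have h3 : x ^ k ≤ 1 := pow_le_one₀ hx0 hx1
    have h4 : (1-x) ^ (n-k) ≤ 1 := pow_le_one₀ (by linarith) (by linarith)
    have h5 : (n.choose k : ℝ) ≤ (2:ℝ)^n := by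
      have : n.choose k ≤ 2^n := by
        rcases le_or_gt k n with hkle | hklt
        · calc n.choose k ≤ ∑ m ∈ Finset.range (n+1), n.choose m :=
              Finset.single_le_sum (fun m _ => Nat.zero_le _)
                (Finset.mem_range.mpr (Nat.lt_succ_of_le hkle))
            _ = 2^n := Nat.sum_range_choose n
        · rw [Nat.choose_eq_zero_of_lt hklt]; exact Nat.zero_le _
      exact_mod_cast this
    rw [bern, abs_of_nonneg (by positivity)]
    calc (n.choose k : ℝ) * x ^ k * (1-x) ^ (n-k) ≤ (n.choose k : ℝ) * 1 * 1 := by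
          apply mul_le_mul (mul_le_mul le_rfl h3 h1 (by positivity)) h4 h2 (by positivity)
      _ = (n.choose k : ℝ) := by ring
      _ ≤ (2:ℝ)^n := h5
  rw [Metric.tendstoUniformlyOn_iff]
  intro ε hε
  set ε' : ℝ := ε / ((n+1) * 2^n + 1) with hε'
  have hε'0 : 0 < ε' := by positivity
  have hcoef : ∀ k ∈ Finset.range (n+1),
      ∀ᶠ ρ : ℝ in Filter.atTop, |Ffun n k ρ f - f ((k:ℝ)/(n:ℝ))| < ε' := by
    intro k hkmem
    rw [Finset.mem_range] at hkmem
    rcases Nat.eq_zero_or_pos k with rfl | hk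
    · apply Filter.Eventually.of_forall
      intro ρ
      have hF0 : Ffun n 0 ρ f = f 0 := by rw [Ffun]; simp
      rw [hF0]
      simp only [Nat.cast_zero, zero_div, sub_self, abs_zero]
      exact hε'0
    · rcases eq_or_lt_of_le (Nat.lt_succ_iff.mp hkmem) with rfl | hlt
      · apply Filter.Eventually.of_forall
        intro ρ
        rw [Ffun, if_neg (by omega), if_pos rfl,
          div_self (show (k:ℝ) ≠ 0 by exact_mod_cast (show k ≠ 0 by omega))]
        simpa using hε'0
      · have := Ffun_tendsto n k hk hlt f hf
        rw [Metric.tendsto_atTop] at this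
        obtain ⟨N, hN⟩ := this ε' hε'0
        filter_upwards [Filter.eventually_ge_atTop N] with ρ hρ
        have := hN ρ hρ
        rwa [Real.dist_eq] at this
  have hall := (Filter.eventually_all_finset (Finset.range (n+1))).mpr hcoef
  filter_upwards [hall] with ρ hρ x hx
  rw [Real.dist_eq, Uop, ← Finset.sum_sub_distrib]
  calc |∑ k ∈ Finset.range (n+1), (f ((k:ℝ)/(n:ℝ)) * bern n k x - Ffun n k ρ f * bern n k x)|
      ≤ ∑ k ∈ Finset.range (n+1), |f ((k:ℝ)/(n:ℝ)) * bern n k x - Ffun n k ρ f * bern n k x| :=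
        Finset.abs_sum_le_sum_abs _ _
    _ ≤ ∑ k ∈ Finset.range (n+1), ε' * 2^n := by
        apply Finset.sum_le_sum
        intro k hkmem
        rw [show f ((k:ℝ)/(n:ℝ)) * bern n k x - Ffun n k ρ f * bern n k x
          = (f ((k:ℝ)/(n:ℝ)) - Ffun n k ρ f) * bern n k x by ring, abs_mul]
        have h1 : |f ((k:ℝ)/(n:ℝ)) - Ffun n k ρ f| ≤ ε' := by
          rw [abs_sub_comm]
          exact (hρ k hkmem).le
        exact mul_le_mul h1 (hbb k x hx) (abs_nonneg _) hε'0.le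
    _ = (n+1) * 2^n * ε' := by
        rw [Finset.sum_const, Finset.card_range]
        push_cast
        ring
    _ < ε := by
        have hD : (0:ℝ) < ((n:ℝ)+1) * 2^n + 1 := by positivity
        have h := (div_lt_one hD).mpr
          (show ((n:ℝ)+1)*2^n < ((n:ℝ)+1)*2^n+1 by linarith)
        calc ((n:ℝ)+1) * 2^n * ε' = ε * ((((n:ℝ)+1)*2^n)/(((n:ℝ)+1)*2^n+1)) := by
              rw [hε']; push_cast; ring
          _ < ε * 1 := by exact mul_lt_mul_of_pos_left h hε
          _ = ε := mul_one ε
end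

section
/- For every integer n ≥ 1, every ρ > 0, and every continuous function f : [0,1] → ℝ, the coefficient [F_{n,0}^ρ,…,F_{n,n}^ρ; f] of x^n in L_n^ρ f equals ((nρ)^{\overline{n}}/(nρ)^n) · V(0,1/n,…,(n−1)/n,1)^{−1} · D, where x^{\overline{n}} = x(x+1)⋯(x+n−1) is the rising factorial, V(0,1/n,…,1) is the Vandermonde determinant of the nodes 0,1/n,…,(n−1)/n,1, and D is the determinant of the (n+1)×(n+1) matrix whose row indexed by k = 0,…,n is (1, k/n, (k/n)², …, (k/n)^{n−1}, F_{n,k}^ρ(f)). -/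
open MeasureTheory

lemma beta_integrand_eq (a b : ℝ) {x : ℝ} (hx : x ∈ Set.Ioc (0:ℝ) 1) :
    (x : ℂ) ^ ((a:ℂ) - 1) * (1 - (x : ℂ)) ^ ((b:ℂ) - 1)
      = ((x ^ (a - 1) * (1 - x) ^ (b - 1) : ℝ) : ℂ) := by
  rw [Complex.ofReal_mul, Complex.ofReal_cpow hx.1.le, Complex.ofReal_cpow (by linarith [hx.2])]
  push_cast
  ring

lemma betaIntegral_ofReal (a b : ℝ) :
    Complex.betaIntegral (a : ℂ) (b : ℂ) = ((betaFn a b : ℝ) : ℂ) := by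
  rw [Complex.betaIntegral, betaFn, ← intervalIntegral.integral_ofReal]
  refine intervalIntegral.integral_congr_ae ?_
  filter_upwards with x hx
  rw [Set.uIoc_of_le zero_le_one] at hx
  exact beta_integrand_eq a b hx

lemma betaFn_intervalIntegrable {a b : ℝ} (ha : 0 < a) (hb : 0 < b) :
    IntervalIntegrable (fun t : ℝ => t ^ (a - 1) * (1 - t) ^ (b - 1)) volume 0 1 := by
  have h := Complex.betaIntegral_convergent (u := a) (v := b) (by simpa) (by simpa)
  have h2 : IntervalIntegrable (fun x : ℝ =>
      ((x : ℂ) ^ ((a:ℂ) - 1) * (1 - (x : ℂ)) ^ ((b:ℂ) - 1)).re) volume 0 1 :=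
    ⟨h.1.re, h.2.re⟩
  refine h2.congr ?_
  intro x hx
  rw [Set.uIoc_of_le zero_le_one] at hx
  beta_reduce
  rw [beta_integrand_eq a b hx, Complex.ofReal_re]

lemma Gamma_add_nat {x : ℝ} (hx : 0 < x) (j : ℕ) :
    Real.Gamma (x + j) = (ascPochhammer ℝ j).eval x * Real.Gamma x := by
  induction j with
  | zero => simp
  | succ j ih =>
    have h1 : x + (j + 1 : ℕ) = (x + j) + 1 := by push_cast; ring
    rw [h1, Real.Gamma_add_one (by positivity), ih, ascPochhammer_succ_eval]
    ring

lemma ascPochhammer_eval_pos {x : ℝ} (hx : 0 < x) (j : ℕ) :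
    0 < (ascPochhammer ℝ j).eval x := by
  induction j with
  | zero => simp
  | succ j ih => rw [ascPochhammer_succ_eval]; positivity

lemma betaFn_ratio {a b : ℝ} (ha : 0 < a) (hb : 0 < b) (j : ℕ) :
    betaFn (a + j) b / betaFn a b
      = (ascPochhammer ℝ j).eval a / (ascPochhammer ℝ j).eval (a + b) := by
  have hab : (0:ℝ) < a + b := by linarith
  have h1 : a + (j:ℝ) + b = (a + b) + (j:ℝ) := by ring
  rw [betaFn_eq_Gamma (by positivity) hb, betaFn_eq_Gamma ha hb, Gamma_add_nat ha j, h1,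
    Gamma_add_nat hab j]
  have g1 := (Real.Gamma_pos_of_pos ha).ne'
  have g2 := (Real.Gamma_pos_of_pos hb).ne'
  have g3 := (Real.Gamma_pos_of_pos hab).ne'
  have p1 := (ascPochhammer_eval_pos ha j).ne'
  have p2 := (ascPochhammer_eval_pos hab j).ne'
  field_simp

lemma moment_integrand_eq {a : ℝ} (j : ℕ) {x : ℝ} (hx : x ∈ Set.Ioc (0:ℝ) 1) (b : ℝ) :
    x ^ (a - 1) * (1 - x) ^ (b - 1) * x ^ j = x ^ ((a + j) - 1) * (1 - x) ^ (b - 1) := by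
  have h1 : x ^ ((a + j : ℝ) - 1) = x ^ (a - 1) * x ^ (j:ℝ) := by
    rw [← Real.rpow_add hx.1]; ring_nf
  rw [h1, Real.rpow_natCast]; ring

lemma moment_integrable {a b : ℝ} (ha : 0 < a) (hb : 0 < b) (j : ℕ) :
    IntervalIntegrable (fun t : ℝ => t ^ (a - 1) * (1 - t) ^ (b - 1) * t ^ j) volume 0 1 := by
  refine (betaFn_intervalIntegrable (a := a + j) (b := b) (by positivity) hb).congr ?_
  intro x hx
  rw [Set.uIoc_of_le zero_le_one] at hx
  exact (moment_integrand_eq j hx b).symm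

lemma integral_moment {a b : ℝ} (ha : 0 < a) (hb : 0 < b) (j : ℕ) :
    ∫ t in (0:ℝ)..1, t ^ (a - 1) * (1 - t) ^ (b - 1) * t ^ j = betaFn (a + j) b := by
  rw [betaFn]
  refine intervalIntegral.integral_congr_ae ?_
  filter_upwards with x hx
  rw [Set.uIoc_of_le zero_le_one] at hx
  exact moment_integrand_eq j hx b

lemma Ffun_pow {n k : ℕ} (hk : k ≤ n) (hn : 1 ≤ n) {ρ : ℝ} (hρ : 0 < ρ) (j : ℕ) :
    Ffun n k ρ (fun x => x ^ j)
      = (ascPochhammer ℝ j).eval ((k:ℝ) * ρ) / (ascPochhammer ℝ j).eval ((n:ℝ) * ρ) := by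
  have hnρ : (0:ℝ) < (n:ℝ) * ρ := by
    have : (0:ℝ) < (n:ℝ) := by exact_mod_cast hn
    positivity
  rcases eq_or_ne k 0 with hk0 | hk0
  · subst hk0
    simp only [Ffun, if_pos]
    rcases eq_or_ne j 0 with hj | hj
    · subst hj; simp
    · rw [Nat.cast_zero, zero_mul, show (ascPochhammer ℝ j).eval 0 = 0 from
        ascPochhammer_ne_zero_eval_zero ℝ hj, zero_pow hj, zero_div]
  · rcases eq_or_ne k n with hkn | hkn
    · subst hkn
      simp only [Ffun, if_neg hk0, if_pos]
      rw [one_pow, div_self (ascPochhammer_eval_pos hnρ j).ne']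
    · have hkpos : 0 < k := Nat.pos_of_ne_zero hk0
      have hklt : k < n := lt_of_le_of_ne hk hkn
      have ha : (0:ℝ) < (k:ℝ) * ρ := by
        have : (0:ℝ) < (k:ℝ) := by exact_mod_cast hkpos
        positivity
      have hb : (0:ℝ) < ((n:ℝ) - (k:ℝ)) * ρ := by
        have : (k:ℝ) < (n:ℝ) := by exact_mod_cast hklt
        have : (0:ℝ) < (n:ℝ) - (k:ℝ) := by linarith
        positivity
      simp only [Ffun, if_neg hk0, if_neg hkn]
      rw [integral_moment ha hb j, inv_mul_eq_div, betaFn_ratio ha hb j]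
      congr 2
      ring

lemma Ffun_poly {n k : ℕ} (hk : k ≤ n) (hn : 1 ≤ n) {ρ : ℝ} (hρ : 0 < ρ)
    (L : Polynomial ℝ) (hLdeg : L.natDegree ≤ n) :
    Ffun n k ρ (fun x => L.eval x)
      = ∑ j ∈ Finset.range (n + 1), L.coeff j *
          ((ascPochhammer ℝ j).eval ((k:ℝ) * ρ) / (ascPochhammer ℝ j).eval ((n:ℝ) * ρ)) := by
  have heval : ∀ x : ℝ, L.eval x = ∑ j ∈ Finset.range (n + 1), L.coeff j * x ^ j := fun x =>
    Polynomial.eval_eq_sum_range' (Nat.lt_succ_of_le hLdeg) x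
  have key : Ffun n k ρ (fun x => ∑ j ∈ Finset.range (n + 1), L.coeff j * x ^ j)
      = ∑ j ∈ Finset.range (n + 1), L.coeff j * Ffun n k ρ (fun x => x ^ j) := by
    rcases eq_or_ne k 0 with hk0 | hk0
    · subst hk0; simp [Ffun]
    · rcases eq_or_ne k n with hkn | hkn
      · subst hkn; simp [Ffun, hk0]
      · have hkpos : 0 < k := Nat.pos_of_ne_zero hk0
        have hklt : k < n := lt_of_le_of_ne hk hkn
        have ha : (0:ℝ) < (k:ℝ) * ρ := by
          have : (0:ℝ) < (k:ℝ) := by exact_mod_cast hkpos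
          positivity
        have hb : (0:ℝ) < ((n:ℝ) - (k:ℝ)) * ρ := by
          have h1 : (k:ℝ) < (n:ℝ) := by exact_mod_cast hklt
          have : (0:ℝ) < (n:ℝ) - (k:ℝ) := by linarith
          positivity
        simp only [Ffun, if_neg hk0, if_neg hkn]
        have hint : ∀ j ∈ Finset.range (n + 1), IntervalIntegrable
            (fun t : ℝ => t ^ ((k:ℝ) * ρ - 1) * (1 - t) ^ (((n:ℝ) - (k:ℝ)) * ρ - 1) *
              (L.coeff j * t ^ j)) volume 0 1 := by
          intro j _
          have := ((moment_integrable ha hb j).const_mul (L.coeff j))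
          refine this.congr ?_
          intro x _
          ring
        have : (∫ t in (0:ℝ)..1, t ^ ((k:ℝ) * ρ - 1) * (1 - t) ^ (((n:ℝ) - (k:ℝ)) * ρ - 1) *
              ∑ j ∈ Finset.range (n + 1), L.coeff j * t ^ j)
            = ∑ j ∈ Finset.range (n + 1), ∫ t in (0:ℝ)..1,
                t ^ ((k:ℝ) * ρ - 1) * (1 - t) ^ (((n:ℝ) - (k:ℝ)) * ρ - 1) *
                  (L.coeff j * t ^ j) := by
          rw [← intervalIntegral.integral_finset_sum hint]
          congr 1
          funext t
          rw [Finset.mul_sum]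
        rw [this, Finset.mul_sum]
        refine Finset.sum_congr rfl fun j _ => ?_
        have : (∫ t in (0:ℝ)..1,
            t ^ ((k:ℝ) * ρ - 1) * (1 - t) ^ (((n:ℝ) - (k:ℝ)) * ρ - 1) * (L.coeff j * t ^ j))
            = L.coeff j * ∫ t in (0:ℝ)..1,
                t ^ ((k:ℝ) * ρ - 1) * (1 - t) ^ (((n:ℝ) - (k:ℝ)) * ρ - 1) * t ^ j := by
          rw [← intervalIntegral.integral_const_mul]
          congr 1
          funext t
          ring
        rw [this]
        ring
  calc Ffun n k ρ (fun x => L.eval x)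
      = Ffun n k ρ (fun x => ∑ j ∈ Finset.range (n + 1), L.coeff j * x ^ j) := by
        congr 1; funext x; exact heval x
    _ = ∑ j ∈ Finset.range (n + 1), L.coeff j * Ffun n k ρ (fun x => x ^ j) := key
    _ = _ := by
        refine Finset.sum_congr rfl fun j _ => ?_
        rw [Ffun_pow hk hn hρ j]

/-- The coefficient `[F_{n,0}^ρ,…,F_{n,n}^ρ; f]` of `x^n` in `L_n^ρ f` equals
`((nρ)^{rising n}/(nρ)^n) · V(0,1/n,…,1)⁻¹ · D`, where `V` is the Vandermonde
determinant of the nodes `k/n` and `D` is the determinant of the matrix whose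
`k`-th row is `(1, k/n, …, (k/n)^{n-1}, F_{n,k}^ρ(f))`. -/
theorem coeff_L_eq_det_formula (n : ℕ) (hn : 1 ≤ n) (ρ : ℝ) (hρ : 0 < ρ)
    (f : ℝ → ℝ) (hf : ContinuousOn f (Set.Icc 0 1))
    (L : Polynomial ℝ) (hLdeg : L.natDegree ≤ n)
    (hL : ∀ k ≤ n, Ffun n k ρ (fun x => L.eval x) = Ffun n k ρ f) :
    L.coeff n =
      ((ascPochhammer ℝ n).eval ((n : ℝ) * ρ) / ((n : ℝ) * ρ) ^ n) *
        (Matrix.det (Matrix.vandermonde (fun i : Fin (n + 1) => (i : ℝ) / (n : ℝ))))⁻¹ *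
        Matrix.det (Matrix.of (fun k j : Fin (n + 1) =>
          if (j : ℕ) = n then Ffun n (k : ℕ) ρ f else ((k : ℝ) / (n : ℝ)) ^ (j : ℕ))) := by
  have hnR : (0:ℝ) < (n:ℝ) := by exact_mod_cast hn
  have hnρ : (0:ℝ) < (n:ℝ) * ρ := by positivity
  set t : Fin (n + 1) → ℝ := fun k => (k : ℝ) / (n : ℝ) with ht
  set A : ℕ → ℝ := fun j => (ascPochhammer ℝ j).eval ((n:ℝ) * ρ) with hA
  have hApos : ∀ j, 0 < A j := fun j => ascPochhammer_eval_pos hnρ j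
  set d : ℕ → ℝ := fun i => ∑ j ∈ Finset.range (n + 1),
      L.coeff j / A j * ((ascPochhammer ℝ j).coeff i * ((n:ℝ) * ρ) ^ i) with hd
  -- last column as a combination of powers of the nodes
  have hFf : ∀ k : Fin (n + 1),
      Ffun n (k : ℕ) ρ f = ∑ i ∈ Finset.range (n + 1), d i * t k ^ i := by
    intro k
    have hk : (k : ℕ) ≤ n := Nat.lt_succ_iff.mp k.isLt
    rw [← hL (k : ℕ) hk, Ffun_poly hk hn hρ L hLdeg]
    calc ∑ j ∈ Finset.range (n + 1), L.coeff j *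
            ((ascPochhammer ℝ j).eval ((k:ℝ) * ρ) / A j)
        = ∑ j ∈ Finset.range (n + 1), ∑ i ∈ Finset.range (n + 1),
            L.coeff j / A j * ((ascPochhammer ℝ j).coeff i * ((n:ℝ) * ρ) ^ i) * t k ^ i := by
          refine Finset.sum_congr rfl fun j hj => ?_
          have hdeg : (ascPochhammer ℝ j).natDegree < n + 1 := by
            rw [ascPochhammer_natDegree]; exact Finset.mem_range.mp hj
          have he : (ascPochhammer ℝ j).eval ((k:ℝ) * ρ)
              = ∑ i ∈ Finset.range (n + 1), (ascPochhammer ℝ j).coeff i * ((k:ℝ) * ρ) ^ i :=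
            Polynomial.eval_eq_sum_range' hdeg _
          have hkρ : ∀ i : ℕ, ((k:ℝ) * ρ) ^ i = ((n:ℝ) * ρ) ^ i * t k ^ i := by
            intro i
            rw [← mul_pow]
            congr 1
            rw [ht]
            field_simp
          rw [he, Finset.sum_div, Finset.mul_sum]
          refine Finset.sum_congr rfl fun i _ => ?_
          rw [hkρ i]
          field_simp
      _ = ∑ i ∈ Finset.range (n + 1), d i * t k ^ i := by
          rw [Finset.sum_comm]
          refine Finset.sum_congr rfl fun i _ => ?_
          rw [hd]
          rw [Finset.sum_mul]
  set W : Matrix (Fin (n + 1)) (Fin (n + 1)) ℝ := Matrix.vandermonde t with hWdef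
  set M : Matrix (Fin (n + 1)) (Fin (n + 1)) ℝ := Matrix.of (fun k j : Fin (n + 1) =>
      if (j : ℕ) = n then Ffun n (k : ℕ) ρ f else t k ^ (j : ℕ)) with hMdef
  set Amat : Matrix (Fin (n + 1)) (Fin (n + 1)) ℝ := Matrix.of (fun i j : Fin (n + 1) =>
      if (j : ℕ) = n then d (i : ℕ) else if i = j then 1 else 0) with hAmatdef
  have hM : M = W * Amat := by
    ext k j
    rw [Matrix.mul_apply]
    by_cases hj : (j : ℕ) = n
    · simp only [hMdef, hAmatdef, hWdef, Matrix.of_apply, Matrix.vandermonde_apply, if_pos hj]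
      rw [hFf k, ← Fin.sum_univ_eq_sum_range (fun i => d i * t k ^ i) (n + 1)]
      exact Finset.sum_congr rfl fun i _ => mul_comm _ _
    · simp only [hMdef, hAmatdef, hWdef, Matrix.of_apply, Matrix.vandermonde_apply, if_neg hj,
        mul_ite, mul_one, mul_zero]
      simp
  have hAdet : Amat.det = d n := by
    have htri : Amat.BlockTriangular id := by
      intro i j hij
      have hij' : j < i := hij
      simp only [hAmatdef, Matrix.of_apply]
      rw [if_neg, if_neg]
      · exact fun h => absurd h hij'.ne'
      · have : (j : ℕ) < (i : ℕ) := hij'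
        have hi : (i : ℕ) ≤ n := Nat.lt_succ_iff.mp i.isLt
        omega
    rw [Matrix.det_of_upperTriangular htri]
    have hcond : ∀ i : Fin (n + 1), ((i : ℕ) = n) ↔ (i = Fin.last n) := by
      intro i; rw [Fin.ext_iff, Fin.val_last]
    have : ∀ i : Fin (n + 1), Amat i i = if i = Fin.last n then d (i : ℕ) else 1 := by
      intro i
      by_cases h : (i : ℕ) = n
      · simp only [hAmatdef, Matrix.of_apply]
        rw [if_pos h, if_pos ((hcond i).mp h)]
      · simp only [hAmatdef, Matrix.of_apply]
        rw [if_neg h, if_neg (fun hh => h ((hcond i).mpr hh))]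
        simp
    simp only [this]
    rw [Finset.prod_ite_eq' Finset.univ (Fin.last n) (fun i => d (i : ℕ))]
    simp [Fin.val_last]
  have hdn : d n = L.coeff n / A n * ((n:ℝ) * ρ) ^ n := by
    simp only [hd]
    rw [Finset.sum_eq_single n]
    · have hm : (ascPochhammer ℝ n).coeff n = 1 := by
        have h1 := monic_ascPochhammer ℝ n
        have h2 := ascPochhammer_natDegree (S := ℝ) n
        rw [Polynomial.Monic] at h1
        rw [Polynomial.leadingCoeff, h2] at h1
        exact h1
      rw [hm]; ring
    · intro j hj hjn
      have hz : (ascPochhammer ℝ j).coeff n = 0 := by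
        refine Polynomial.coeff_eq_zero_of_natDegree_lt ?_
        rw [ascPochhammer_natDegree]
        exact lt_of_le_of_ne (Nat.lt_succ_iff.mp (Finset.mem_range.mp hj)) hjn
      rw [hz]; ring
    · intro h; exact absurd (Finset.self_mem_range_succ n) h
  have hWne : W.det ≠ 0 := by
    refine Matrix.det_vandermonde_ne_zero_iff.mpr ?_
    intro i j h
    have h2 : (i : ℕ) = (j : ℕ) := by
      simp only [ht, div_left_inj' hnR.ne'] at h
      exact_mod_cast h
    exact Fin.ext h2
  have hdetM : M.det = W.det * d n := by rw [hM, Matrix.det_mul, hAdet]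
  rw [hdetM, hdn]
  have h1 : A n ≠ 0 := (hApos n).ne'
  have h2 : ((n:ℝ) * ρ) ^ n ≠ 0 := pow_ne_zero n hnρ.ne'
  field_simp
  ring
end
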